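/- (Makespan Lower Bound for random MAPF on 3D grids.) Let m1 ≥ m2 ≥ m3 ≥ 1, let α ∈ (0, 1/2), set a_j = ⌊α·m_j⌋ for j = 1, 2, 3, and let n ≥ 1. Let s_1, g_1, …, s_n, g_n be 2n mutually independent random vertices, each uniformly distributed on V = Fin m1 × Fin m2 × Fin m3. Then with probability at least 1 − (1 − (a1·a2·a3/(m1·m2·m3))²)^n, there is an agent i whose start s_i lies in the corner box [0, a1) × [0, a2) × [0, a3) and whose goal g_i lies in the opposite corner box [m1−a1, m1) × [m2−a2, m2) × [m3−a3, m3), and hence the maximum over agents of the ℓ1 distance from start to goal is at least m1 + m2 + m3 − 2·(a1 + a2 + a3). -/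

import Mathlib

/-- The ℓ₁ (Manhattan) distance between two vertices of the `m1 × m2 × m3`
grid. -/
def MDist3 {m1 m2 m3 : ℕ} (u v : Fin m1 × Fin m2 × Fin m3) : ℕ :=
  (((u.1 : ℕ) : ℤ) - ((v.1 : ℕ) : ℤ)).natAbs +
    (((u.2.1 : ℕ) : ℤ) - ((v.2.1 : ℕ) : ℤ)).natAbs +
    (((u.2.2 : ℕ) : ℤ) - ((v.2.2 : ℕ) : ℤ)).natAbs

lemma card_filter_lt' (m a : ℕ) (ha : a ≤ m) :
    (Finset.univ.filter (fun x : Fin m => (x : ℕ) < a)).card = a := by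
  have e : {x : Fin m // (x : ℕ) < a} ≃ Fin a :=
    { toFun := fun x => ⟨x.1, x.2⟩
      invFun := fun y => ⟨⟨y.1, lt_of_lt_of_le y.2 ha⟩, y.2⟩
      left_inv := fun x => rfl
      right_inv := fun y => rfl }
  have := Fintype.card_congr e
  simpa [Fintype.card_subtype] using this

lemma card_filter_ge' (m a : ℕ) (ha : a ≤ m) :
    (Finset.univ.filter (fun x : Fin m => m - a ≤ (x : ℕ))).card = a := by
  have h := Finset.card_filter_add_card_filter_not
    (s := (Finset.univ : Finset (Fin m))) (p := fun x : Fin m => (x : ℕ) < m - a)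
  have h1 := card_filter_lt' m (m - a) (by omega)
  simp only [not_lt, Finset.card_univ, Fintype.card_fin] at h
  omega

lemma card_filter_prod' {β γ : Type*} [Fintype β] [Fintype γ]
    (p : β → Prop) (q : γ → Prop) [DecidablePred p] [DecidablePred q] :
    (Finset.univ.filter (fun v : β × γ => p v.1 ∧ q v.2)).card =
      (Finset.univ.filter p).card * (Finset.univ.filter q).card := by
  rw [← Finset.card_product]
  congr 1
  ext v
  simp [Finset.mem_product]

lemma card_filter_pi' {ι β : Type*} [Fintype ι] [DecidableEq ι] [Fintype β]
    (q : β → Prop) [DecidablePred q] :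
    (Finset.univ.filter (fun ω : ι → β => ∀ i, q (ω i))).card =
      (Finset.univ.filter q).card ^ Fintype.card ι := by
  have h : Finset.univ.filter (fun ω : ι → β => ∀ i, q (ω i))
      = Fintype.piFinset (fun _ => Finset.univ.filter q) := by
    ext ω; simp [Fintype.mem_piFinset]
  rw [h, Fintype.card_piFinset]
  simp

lemma two_floor_le' (α : ℝ) (hα0 : 0 ≤ α) (hα1 : α < 1 / 2) (m : ℕ) (hm : 0 < m) :
    2 * ⌊α * m⌋₊ ≤ m := by
  have hm' : (0 : ℝ) < m := by exact_mod_cast hm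
  have h1 : (⌊α * m⌋₊ : ℝ) ≤ α * m := Nat.floor_le (by positivity)
  have h2 : α * m < m / 2 := by nlinarith
  have h3 : ((2 * ⌊α * m⌋₊ : ℕ) : ℝ) ≤ (m : ℝ) := by push_cast; linarith
  exact_mod_cast h3

lemma mdist_corner_bound' (m1 m2 m3 a1 a2 a3 : ℕ)
    (h1 : 2 * a1 ≤ m1) (h2 : 2 * a2 ≤ m2) (h3 : 2 * a3 ≤ m3)
    (u v : Fin m1 × Fin m2 × Fin m3)
    (q1 : (u.1 : ℕ) < a1) (q2 : (u.2.1 : ℕ) < a2) (q3 : (u.2.2 : ℕ) < a3)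
    (q4 : m1 - a1 ≤ (v.1 : ℕ)) (q5 : m2 - a2 ≤ (v.2.1 : ℕ)) (q6 : m3 - a3 ≤ (v.2.2 : ℕ)) :
    m1 + m2 + m3 - 2 * (a1 + a2 + a3) ≤ MDist3 u v := by
  have b1 := v.1.isLt
  have b2 := v.2.1.isLt
  have b3 := v.2.2.isLt
  unfold MDist3
  omega

open Classical in
/-- Makespan lower bound for random MAPF on 3D grids: with probability at
least `1 - (1 - (a1 a2 a3 / (m1 m2 m3))²)^n` (uniform measure on `(V × V)^n`),
some agent has its start in the corner box `[0,a1) × [0,a2) × [0,a3)` and its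
goal in the opposite corner box, and hence with at least that probability the
maximum start-goal ℓ₁ distance over agents is at least
`m1 + m2 + m3 - 2 (a1 + a2 + a3)`. -/
theorem random_mapf_makespan_lower_bound_3d
    (m1 m2 m3 n : ℕ) (h32 : m3 ≤ m2) (h21 : m2 ≤ m1) (h3 : 1 ≤ m3) (hn : 1 ≤ n)
    (α : ℝ) (hα0 : 0 < α) (hα1 : α < 1 / 2)
    (a1 a2 a3 : ℕ) (ha1 : a1 = ⌊α * m1⌋₊) (ha2 : a2 = ⌊α * m2⌋₊) (ha3 : a3 = ⌊α * m3⌋₊) :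
    1 - (1 - ((a1 : ℝ) * (a2 : ℝ) * (a3 : ℝ) / ((m1 : ℝ) * (m2 : ℝ) * (m3 : ℝ))) ^ 2) ^ n ≤
      ((Finset.univ.filter
          (fun ω : Fin n → (Fin m1 × Fin m2 × Fin m3) × (Fin m1 × Fin m2 × Fin m3) =>
            ∃ i, ((ω i).1.1 : ℕ) < a1 ∧ ((ω i).1.2.1 : ℕ) < a2 ∧ ((ω i).1.2.2 : ℕ) < a3 ∧
              m1 - a1 ≤ ((ω i).2.1 : ℕ) ∧ m2 - a2 ≤ ((ω i).2.2.1 : ℕ) ∧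
              m3 - a3 ≤ ((ω i).2.2.2 : ℕ))).card : ℝ) /
        (Fintype.card
          (Fin n → (Fin m1 × Fin m2 × Fin m3) × (Fin m1 × Fin m2 × Fin m3)) : ℝ) ∧
    1 - (1 - ((a1 : ℝ) * (a2 : ℝ) * (a3 : ℝ) / ((m1 : ℝ) * (m2 : ℝ) * (m3 : ℝ))) ^ 2) ^ n ≤
      ((Finset.univ.filter
          (fun ω : Fin n → (Fin m1 × Fin m2 × Fin m3) × (Fin m1 × Fin m2 × Fin m3) =>
            ∃ i, m1 + m2 + m3 - 2 * (a1 + a2 + a3) ≤ MDist3 (ω i).1 (ω i).2)).card : ℝ) /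
        (Fintype.card
          (Fin n → (Fin m1 × Fin m2 × Fin m3) × (Fin m1 × Fin m2 × Fin m3)) : ℝ) := by
  classical
  have hm3 : 0 < m3 := h3
  have hm2 : 0 < m2 := lt_of_lt_of_le hm3 h32
  have hm1 : 0 < m1 := lt_of_lt_of_le hm2 h21
  have h2a1 : 2 * a1 ≤ m1 := ha1 ▸ two_floor_le' α hα0.le hα1 m1 hm1
  have h2a2 : 2 * a2 ≤ m2 := ha2 ▸ two_floor_le' α hα0.le hα1 m2 hm2
  have h2a3 : 2 * a3 ≤ m3 := ha3 ▸ two_floor_le' α hα0.le hα1 m3 hm3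
  have ha1m : a1 ≤ m1 := by omega
  have ha2m : a2 ≤ m2 := by omega
  have ha3m : a3 ≤ m3 := by omega
  set V := Fin m1 × Fin m2 × Fin m3 with hV
  set P : V × V → Prop := fun v =>
    ((v.1.1 : ℕ) < a1 ∧ (v.1.2.1 : ℕ) < a2 ∧ (v.1.2.2 : ℕ) < a3 ∧
      m1 - a1 ≤ (v.2.1 : ℕ) ∧ m2 - a2 ≤ (v.2.2.1 : ℕ) ∧ m3 - a3 ≤ (v.2.2.2 : ℕ)) with hP
  -- counting the single-pair event
  have c23lt : (Finset.univ.filter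
      (fun w : Fin m2 × Fin m3 => (w.1 : ℕ) < a2 ∧ (w.2 : ℕ) < a3)).card = a2 * a3 := by
    rw [card_filter_prod' (fun x : Fin m2 => (x : ℕ) < a2) (fun x : Fin m3 => (x : ℕ) < a3),
      card_filter_lt' _ _ ha2m, card_filter_lt' _ _ ha3m]
  have c23ge : (Finset.univ.filter
      (fun w : Fin m2 × Fin m3 => m2 - a2 ≤ (w.1 : ℕ) ∧ m3 - a3 ≤ (w.2 : ℕ))).card
      = a2 * a3 := by
    rw [card_filter_prod' (fun x : Fin m2 => m2 - a2 ≤ (x : ℕ))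
      (fun x : Fin m3 => m3 - a3 ≤ (x : ℕ)),
      card_filter_ge' _ _ ha2m, card_filter_ge' _ _ ha3m]
  have cSlt : (Finset.univ.filter
      (fun u : V => (u.1 : ℕ) < a1 ∧ (u.2.1 : ℕ) < a2 ∧ (u.2.2 : ℕ) < a3)).card
      = a1 * (a2 * a3) := by
    rw [card_filter_prod' (fun x : Fin m1 => (x : ℕ) < a1)
      (fun w : Fin m2 × Fin m3 => (w.1 : ℕ) < a2 ∧ (w.2 : ℕ) < a3),
      card_filter_lt' _ _ ha1m, c23lt]
  have cSge : (Finset.univ.filter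
      (fun u : V => m1 - a1 ≤ (u.1 : ℕ) ∧ m2 - a2 ≤ (u.2.1 : ℕ) ∧ m3 - a3 ≤ (u.2.2 : ℕ))).card
      = a1 * (a2 * a3) := by
    rw [card_filter_prod' (fun x : Fin m1 => m1 - a1 ≤ (x : ℕ))
      (fun w : Fin m2 × Fin m3 => m2 - a2 ≤ (w.1 : ℕ) ∧ m3 - a3 ≤ (w.2 : ℕ)),
      card_filter_ge' _ _ ha1m, c23ge]
  have cardP : (Finset.univ.filter P).card = (a1 * (a2 * a3)) * (a1 * (a2 * a3)) := by
    have e : Finset.univ.filter P = Finset.univ.filter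
        (fun v : V × V =>
          ((v.1.1 : ℕ) < a1 ∧ (v.1.2.1 : ℕ) < a2 ∧ (v.1.2.2 : ℕ) < a3) ∧
          (m1 - a1 ≤ (v.2.1 : ℕ) ∧ m2 - a2 ≤ (v.2.2.1 : ℕ) ∧
            m3 - a3 ≤ (v.2.2.2 : ℕ))) := by
      apply Finset.filter_congr
      intro v _
      simp only [hP]
      tauto
    rw [e, card_filter_prod' (fun u : V => (u.1 : ℕ) < a1 ∧ (u.2.1 : ℕ) < a2 ∧ (u.2.2 : ℕ) < a3)
      (fun u : V => m1 - a1 ≤ (u.1 : ℕ) ∧ m2 - a2 ≤ (u.2.1 : ℕ) ∧ m3 - a3 ≤ (u.2.2 : ℕ)),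
      cSlt, cSge]
  -- total card of V × V
  have hKM : (a1 * (a2 * a3)) * (a1 * (a2 * a3)) ≤ (m1 * (m2 * m3)) * (m1 * (m2 * m3)) := by
    have : a1 * (a2 * a3) ≤ m1 * (m2 * m3) :=
      Nat.mul_le_mul ha1m (Nat.mul_le_mul ha2m ha3m)
    exact Nat.mul_le_mul this this
  have hcardVV : Fintype.card (V × V) = (m1 * (m2 * m3)) * (m1 * (m2 * m3)) := by
    simp [hV, Fintype.card_prod]
  have cardNP : (Finset.univ.filter (fun v : V × V => ¬ P v)).card
      = (m1 * (m2 * m3)) * (m1 * (m2 * m3)) - (a1 * (a2 * a3)) * (a1 * (a2 * a3)) := by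
    have h := Finset.card_filter_add_card_filter_not
      (s := (Finset.univ : Finset (V × V))) (p := P)
    rw [Finset.card_univ, hcardVV, cardP] at h
    omega
  -- counting over all agent tuples
  have hsplit := Finset.card_filter_add_card_filter_not
    (s := (Finset.univ : Finset (Fin n → V × V))) (p := fun ω => ∃ i, P (ω i))
  have hAll : (Finset.univ.filter (fun ω : Fin n → V × V => ¬ ∃ i, P (ω i))).card
      = ((m1 * (m2 * m3)) * (m1 * (m2 * m3)) - (a1 * (a2 * a3)) * (a1 * (a2 * a3))) ^ n := by
    have h := card_filter_pi' (ι := Fin n) (q := fun v : V × V => ¬ P v)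
    rw [cardNP, Fintype.card_fin] at h
    rw [← h]
    apply congrArg Finset.card
    ext ω
    simp [Finset.mem_filter, not_exists]
  have hTotal : Fintype.card (Fin n → V × V) = ((m1 * (m2 * m3)) * (m1 * (m2 * m3))) ^ n := by
    rw [Fintype.card_fun, hcardVV, Fintype.card_fin]
  rw [Finset.card_univ, hTotal, hAll] at hsplit
  -- real arithmetic
  set Mr : ℝ := (m1 : ℝ) * ((m2 : ℝ) * (m3 : ℝ)) with hMr
  set Kr : ℝ := (a1 : ℝ) * ((a2 : ℝ) * (a3 : ℝ)) with hKr
  have hMrpos : (0 : ℝ) < Mr := by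
    have h1 : (0:ℝ) < (m1:ℝ) := by exact_mod_cast hm1
    have h2 : (0:ℝ) < (m2:ℝ) := by exact_mod_cast hm2
    have h3' : (0:ℝ) < (m3:ℝ) := by exact_mod_cast hm3
    positivity
  have hsub : (((m1 * (m2 * m3)) * (m1 * (m2 * m3))
      - (a1 * (a2 * a3)) * (a1 * (a2 * a3)) : ℕ) : ℝ) = Mr * Mr - Kr * Kr := by
    rw [Nat.cast_sub hKM]
    push_cast
    ring
  have hEr : ((Finset.univ.filter (fun ω : Fin n → V × V => ∃ i, P (ω i))).card : ℝ)
      = (Mr * Mr) ^ n - (Mr * Mr - Kr * Kr) ^ n := by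
    have hc : ((Finset.univ.filter (fun ω : Fin n → V × V => ∃ i, P (ω i))).card : ℝ)
        + (((m1 * (m2 * m3)) * (m1 * (m2 * m3))
          - (a1 * (a2 * a3)) * (a1 * (a2 * a3)) : ℕ) : ℝ) ^ n
        = ((((m1 * (m2 * m3)) * (m1 * (m2 * m3)) : ℕ)) : ℝ) ^ n := by
      exact_mod_cast congrArg (fun k : ℕ => (k : ℝ)) hsplit
    have hMM : (((m1 * (m2 * m3)) * (m1 * (m2 * m3)) : ℕ) : ℝ) = Mr * Mr := by
      rw [hMr]; push_cast; ring
    rw [hsub, hMM] at hc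
    linarith
  have hTotR : ((Fintype.card (Fin n → V × V) : ℕ) : ℝ) = (Mr * Mr) ^ n := by
    rw [hTotal]
    push_cast
    ring
  have hKrnn : (0 : ℝ) ≤ Kr := by positivity
  have hprob : 1 - (1 - ((a1 : ℝ) * (a2 : ℝ) * (a3 : ℝ) /
        ((m1 : ℝ) * (m2 : ℝ) * (m3 : ℝ))) ^ 2) ^ n
      = ((Finset.univ.filter (fun ω : Fin n → V × V => ∃ i, P (ω i))).card : ℝ) /
        (Fintype.card (Fin n → V × V) : ℝ) := by
    rw [hEr, hTotR]
    have h1 : (a1 : ℝ) * (a2 : ℝ) * (a3 : ℝ) / ((m1 : ℝ) * (m2 : ℝ) * (m3 : ℝ)) = Kr / Mr := by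
      rw [hKr, hMr]; ring_nf
    rw [h1]
    have h2 : 1 - (Kr / Mr) ^ 2 = (Mr * Mr - Kr * Kr) / (Mr * Mr) := by
      field_simp
    rw [h2, div_pow, sub_div, div_self (pow_ne_zero _ (by positivity))]
  constructor
  · exact le_of_eq hprob
  · rw [hprob]
    have hsubset : (Finset.univ.filter (fun ω : Fin n → V × V => ∃ i, P (ω i))) ⊆
        (Finset.univ.filter (fun ω : Fin n → V × V =>
          ∃ i, m1 + m2 + m3 - 2 * (a1 + a2 + a3) ≤ MDist3 (ω i).1 (ω i).2)) := by
      apply Finset.monotone_filter_right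
      rintro ω _ ⟨i, hi⟩
      refine ⟨i, ?_⟩
      rw [hP] at hi
      obtain ⟨q1, q2, q3, q4, q5, q6⟩ := hi
      exact mdist_corner_bound' m1 m2 m3 a1 a2 a3 h2a1 h2a2 h2a3
        (ω i).1 (ω i).2 q1 q2 q3 q4 q5 q6
    have hc := Finset.card_le_card hsubset
    have hpos : (0 : ℝ) < (Fintype.card (Fin n → V × V) : ℝ) := by
      rw [hTotR]; positivity
    have hle : ((Finset.univ.filter (fun ω : Fin n → V × V => ∃ i, P (ω i))).card : ℝ)
        ≤ ((Finset.univ.filter (fun ω : Fin n → V × V =>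
          ∃ i, m1 + m2 + m3 - 2 * (a1 + a2 + a3) ≤ MDist3 (ω i).1 (ω i).2)).card : ℝ) := by
      exact_mod_cast hc
    gcongr
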